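/- Let q be a prime power, let P ∈ 𝔽_q[x_1, …, x_m], let Q = (Q_1, …, Q_m) be an m-tuple of polynomials in 𝔽_q[y_1, …, y_j], and let a ∈ 𝔽_q^j. Then mult(P ∘ Q, a) ≥ mult(P, Q(a)), where P ∘ Q denotes the polynomial in 𝔽_q[y_1, …, y_j] obtained by substituting Q_i(y) for x_i in P. -/

import Mathlib

/-- The `β`-th Hasse derivative of a multivariate polynomial `f`: the coefficient of
`y^β` in `f(x + y)`, as a polynomial in `x`. -/
noncomputable def hasseDeriv {m : ℕ} {F : Type*} [CommRing F]
    (β : Fin m →₀ ℕ) (f : MvPolynomial (Fin m) F) : MvPolynomial (Fin m) F :=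
  MvPolynomial.coeff β
    (MvPolynomial.eval₂ (MvPolynomial.C.comp MvPolynomial.C)
      (fun i => MvPolynomial.C (MvPolynomial.X i) + MvPolynomial.X i) f)

/-- The multiplicity of `f` at the point `a`: the supremum of all `M ∈ ℤ_{≥0}` such that
`f^{(β)}(a) = 0` for all `β` with `|β| < M`. -/
noncomputable def polyMult {m : ℕ} {F : Type*} [CommRing F]
    (f : MvPolynomial (Fin m) F) (a : Fin m → F) : ℕ∞ :=
  ⨆ M ∈ {M : ℕ | ∀ β : Fin m →₀ ℕ, (∑ i, β i) < M →
    MvPolynomial.eval a (hasseDeriv β f) = 0}, (M : ℕ∞)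

open MvPolynomial

section Aux

variable {F : Type*} [CommRing F]

/-- All coefficients of (total) degree `< n` vanish. -/
def LowZero {j : ℕ} (n : ℕ) (p : MvPolynomial (Fin j) F) : Prop :=
  ∀ γ : Fin j →₀ ℕ, (∑ i, γ i) < n → coeff γ p = 0

lemma lowZero_mul {j : ℕ} {n k : ℕ} {p r : MvPolynomial (Fin j) F}
    (hp : LowZero n p) (hr : LowZero k r) : LowZero (n + k) (p * r) := by
  intro γ hγ
  rw [coeff_mul]
  apply Finset.sum_eq_zero
  intro x hx
  rw [Finset.HasAntidiagonal.mem_antidiagonal] at hx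
  have hsum : (∑ i, x.1 i) + (∑ i, x.2 i) = ∑ i, γ i := by
    rw [← Finset.sum_add_distrib]
    exact Finset.sum_congr rfl fun i _ => by rw [← hx]; rfl
  by_cases h1 : (∑ i, x.1 i) < n
  · rw [hp x.1 h1, zero_mul]
  · rw [hr x.2 (by omega), mul_zero]

lemma lowZero_of_constantCoeff {j : ℕ} {p : MvPolynomial (Fin j) F}
    (hp : constantCoeff p = 0) : LowZero 1 p := by
  intro γ hγ
  have : γ = 0 := by
    ext i
    have := Finset.sum_eq_zero_iff.mp (Nat.lt_one_iff.mp hγ) i (Finset.mem_univ i)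
    simpa using this
  rw [this]
  exact hp

lemma lowZero_pow {j : ℕ} {p : MvPolynomial (Fin j) F}
    (hp : constantCoeff p = 0) (k : ℕ) : LowZero k (p ^ k) := by
  induction k with
  | zero => exact fun γ hγ => absurd hγ (Nat.not_lt_zero _)
  | succ n ih =>
    rw [pow_succ]
    exact lowZero_mul ih (lowZero_of_constantCoeff hp)

lemma lowZero_prod {j : ℕ} {ι : Type*} (s : Finset ι) (f : ι → MvPolynomial (Fin j) F)
    (n : ι → ℕ) (h : ∀ i ∈ s, LowZero (n i) (f i)) :
    LowZero (∑ i ∈ s, n i) (∏ i ∈ s, f i) := by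
  classical
  induction s using Finset.induction_on with
  | empty =>
    intro γ hγ
    simp at hγ
  | @insert x s hx ih =>
    rw [Finset.sum_insert hx, Finset.prod_insert hx]
    exact lowZero_mul (h x (Finset.mem_insert_self x s))
      (ih fun i hi => h i (Finset.mem_insert_of_mem hi))

/-- The shift `f(y) ↦ f(a + y)`. -/
noncomputable def shiftPoly {m : ℕ} (a : Fin m → F) :
    MvPolynomial (Fin m) F →+* MvPolynomial (Fin m) F :=
  eval₂Hom C (fun i => C (a i) + X i)

lemma eval_hasseDeriv {m : ℕ} (a : Fin m → F) (β : Fin m →₀ ℕ) (f : MvPolynomial (Fin m) F) :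
    eval a (hasseDeriv β f) = coeff β (shiftPoly a f) := by
  unfold hasseDeriv shiftPoly
  rw [← coeff_map]
  congr 1
  rw [eval₂_comp_left (map (eval a))]
  simp only [coe_eval₂Hom]
  congr 1
  · ext c
    simp
  · funext i
    simp

lemma constantCoeff_shiftPoly {m : ℕ} (a : Fin m → F) (f : MvPolynomial (Fin m) F) :
    constantCoeff (shiftPoly a f) = eval a f := by
  unfold shiftPoly
  rw [coe_eval₂Hom, eval₂_comp_left constantCoeff]
  rw [show (constantCoeff.comp C : F →+* F) = RingHom.id F from by ext c; simp,
    show ((constantCoeff ∘ fun i => (C (a i) + X i : MvPolynomial (Fin m) F)) = a) from by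
      funext i; simp]
  exact eval₂_id f

end Aux

/-- `mult(P ∘ Q, a) ≥ mult(P, Q(a))`, where `P ∘ Q` is obtained by substituting
`Q_i(y)` for `x_i` in `P`. -/
theorem polyMult_comp_ge {F : Type*} [Field F] [Fintype F]
    (q m j : ℕ) (hq : IsPrimePow q) (hcard : Fintype.card F = q)
    (P : MvPolynomial (Fin m) F) (Q : Fin m → MvPolynomial (Fin j) F) (a : Fin j → F) :
    polyMult P (fun i => MvPolynomial.eval a (Q i)) ≤
      polyMult (MvPolynomial.aeval Q P) a := by
  unfold polyMult
  apply biSup_mono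
  intro M hM γ hγ
  set b : Fin m → F := fun i => eval a (Q i) with hb
  -- translate hypothesis and goal into coefficients of shifted polynomials
  have hM' : LowZero M (shiftPoly b P) := fun β hβ => by
    rw [← eval_hasseDeriv]; exact hM β hβ
  rw [eval_hasseDeriv]
  revert γ hγ
  show LowZero M (shiftPoly a (aeval Q P))
  -- the g i have zero constant coefficient
  set g : Fin m → MvPolynomial (Fin j) F := fun i => shiftPoly a (Q i) - C (b i) with hg
  have hgc : ∀ i, constantCoeff (g i) = 0 := by
    intro i
    simp [hg, constantCoeff_shiftPoly, hb]
  -- key identity: shiftPoly a (aeval Q P) = eval₂ C g (shiftPoly b P)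
  have key : shiftPoly a (aeval Q P) = eval₂ C g (shiftPoly b P) := by
    have h1 : shiftPoly a (aeval Q P) = eval₂ C (fun i => shiftPoly a (Q i)) P := by
      rw [aeval_def, algebraMap_eq, shiftPoly,
        eval₂_comp_left (eval₂Hom C fun i => C (a i) + X i) C Q P]
      congr 1
      ext c
      simp
    have h2 : (eval₂Hom C g) (eval₂ C (fun i => C (b i) + X i) P)
        = eval₂ C (fun i => shiftPoly a (Q i)) P := by
      rw [eval₂_comp_left (eval₂Hom C g) C (fun i => C (b i) + X i) P]
      congr 1
      · ext c
        simp
      · funext i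
        simp only [Function.comp_apply, map_add, eval₂Hom_C, eval₂Hom_X', hg]
        ring
    exact h1.trans h2.symm
  rw [key, eval₂_eq']
  intro γ hγ
  rw [coeff_sum]
  apply Finset.sum_eq_zero
  intro d hd
  have hdM : M ≤ ∑ i, d i := by
    by_contra h
    exact (mem_support_iff.mp hd) (hM' d (by omega))
  have hprod : LowZero (∑ i, d i) (∏ i, g i ^ d i) :=
    lowZero_prod Finset.univ _ _ (fun i _ => lowZero_pow (hgc i) (d i))
  rw [coeff_C_mul, hprod γ (by omega), mul_zero]
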